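/- Moon's theorem. Let n ≥ 1 and let x : Fin n → ℝ be monotone increasing. Then there exists a win-probability matrix p of size n whose mean score sequence is x if and only if ∑_{i=0}^{k−1} x i ≥ k(k−1)/2 for every 1 ≤ k ≤ n, with equality for k = n (i.e. x is majorized by (0,1,…,n−1)). -/
import Mathlib


/-- A win-probability matrix of size `n`: entries in `[0,1]` with
`p i j + p j i = 1` for `i ≠ j`. -/
def IsWinProbMatrix {n : ℕ} (p : Fin n → Fin n → ℝ) : Prop :=
  (∀ i j, 0 ≤ p i j ∧ p i j ≤ 1) ∧ ∀ i j, i ≠ j → p i j + p j i = 1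

/-- Mean score sequence of a win-probability matrix. -/
def meanScore {n : ℕ} (p : Fin n → Fin n → ℝ) (i : Fin n) : ℝ :=
  ∑ j ∈ Finset.univ.filter (fun j => j ≠ i), p i j

private lemma moon_cast_q (k : ℕ) : ((k * (k - 1) : ℕ) : ℝ) = (k : ℝ) * ((k : ℝ) - 1) := by
  cases k with
  | zero => simp
  | succ m => push_cast [Nat.succ_sub_one]; ring

private lemma moon_pair_sum {n : ℕ} {p : Fin n → Fin n → ℝ}
    (hp : IsWinProbMatrix p) (S : Finset (Fin n)) :
    ∑ i ∈ S, ∑ j ∈ S.filter (fun j => j ≠ i), p i j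
      = ((S.card * (S.card - 1) : ℕ) : ℝ) / 2 := by
  have base : ∀ i ∈ S, ∑ j ∈ S.filter (fun j => j ≠ i), p i j
      = ∑ j ∈ S, if j ≠ i then p i j else 0 := by
    intro i _; rw [Finset.sum_filter]
  have swap : (∑ i ∈ S, ∑ j ∈ S, if j ≠ i then p j i else 0)
      = ∑ i ∈ S, ∑ j ∈ S, if j ≠ i then p i j else 0 := by
    rw [Finset.sum_comm]
    refine Finset.sum_congr rfl fun i _ => Finset.sum_congr rfl fun j _ => ?_
    by_cases h : j = i
    · simp [h]
    · have h' : ¬ i = j := fun e => h e.symm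
      simp [h, h']
  have key : (∑ i ∈ S, ∑ j ∈ S, if j ≠ i then p i j else 0)
      + (∑ i ∈ S, ∑ j ∈ S, if j ≠ i then p i j else 0)
      = (S.card : ℝ) * ((S.card : ℝ) - 1) := by
    nth_rewrite 2 [← swap]
    rw [← Finset.sum_add_distrib]
    have : ∀ i ∈ S, ((∑ j ∈ S, if j ≠ i then p i j else 0)
        + ∑ j ∈ S, if j ≠ i then p j i else 0) = (S.card : ℝ) - 1 := by
      intro i hi
      rw [← Finset.sum_add_distrib]
      have : ∀ j ∈ S, ((if j ≠ i then p i j else 0) + if j ≠ i then p j i else 0)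
          = if j ≠ i then (1:ℝ) else 0 := by
        intro j _
        by_cases h : j = i
        · simp [h]
        · simp only [h, if_pos, Ne, not_false_iff, if_true]
          exact hp.2 i j (fun e => h e.symm)
      rw [Finset.sum_congr rfl this, ← Finset.sum_filter, Finset.sum_const,
        nsmul_eq_mul, mul_one, Finset.filter_ne' S i, Finset.card_erase_of_mem hi]
      have h1 : 1 ≤ S.card := Finset.card_pos.mpr ⟨i, hi⟩
      rw [Nat.cast_sub h1]
      norm_num
    rw [Finset.sum_congr rfl this, Finset.sum_const, nsmul_eq_mul]
  rw [Finset.sum_congr rfl base]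
  rw [moon_cast_q]
  linarith [key]

private def MoonCond (n : ℕ) (x : Fin n → ℝ) : Prop :=
  (∀ S : Finset (Fin n), ((S.card * (S.card - 1) : ℕ) : ℝ) / 2 ≤ ∑ i ∈ S, x i) ∧
    ∑ i, x i = ((n * (n - 1) : ℕ) : ℝ) / 2

private lemma moon_forward {n : ℕ} {p : Fin n → Fin n → ℝ} {x : Fin n → ℝ}
    (hp : IsWinProbMatrix p) (hs : ∀ i, meanScore p i = x i) : MoonCond n x := by
  constructor
  · intro S
    rw [← moon_pair_sum hp S]
    have : ∀ i ∈ S, ∑ j ∈ S.filter (fun j => j ≠ i), p i j ≤ x i := by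
      intro i _
      rw [← hs i]
      apply Finset.sum_le_sum_of_subset_of_nonneg
      · exact Finset.filter_subset_filter _ (Finset.subset_univ S)
      · intro j _ _; exact (hp.1 i j).1
    exact Finset.sum_le_sum this
  · have := moon_pair_sum hp (Finset.univ : Finset (Fin n))
    rw [Finset.card_univ, Fintype.card_fin] at this
    rw [← this]
    refine Finset.sum_congr rfl fun i _ => ?_
    rw [← hs i]; rfl

private lemma moon_combine {n : ℕ} {p q : Fin n → Fin n → ℝ} {y z : Fin n → ℝ}
    (hp : IsWinProbMatrix p) (hq : IsWinProbMatrix q)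
    (hyp : ∀ i, meanScore p i = y i) (hzq : ∀ i, meanScore q i = z i)
    {a b : ℝ} (ha : 0 ≤ a) (hb : 0 ≤ b) (hab : a + b = 1) :
    IsWinProbMatrix (fun i j => a * p i j + b * q i j) ∧
      ∀ i, meanScore (fun i j => a * p i j + b * q i j) i = a * y i + b * z i := by
  refine ⟨⟨fun i j => ⟨?_, ?_⟩, fun i j hij => ?_⟩, fun i => ?_⟩
  · exact add_nonneg (mul_nonneg ha (hp.1 i j).1) (mul_nonneg hb (hq.1 i j).1)
  · show a * p i j + b * q i j ≤ 1
    nlinarith [mul_nonneg ha (sub_nonneg.mpr (hp.1 i j).2),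
      mul_nonneg hb (sub_nonneg.mpr (hq.1 i j).2)]
  · show a * p i j + b * q i j + (a * p j i + b * q j i) = 1
    linear_combination a * hp.2 i j hij + b * hq.2 i j hij + hab
  · unfold meanScore
    rw [← hyp i, ← hzq i]
    unfold meanScore
    rw [Finset.mul_sum, Finset.mul_sum, ← Finset.sum_add_distrib]

private lemma moon_sum_erase {n s : ℕ} {S : Finset (Fin n)} (e : Fin s ≃ {j // j ∈ S})
    (q : Fin s → ℝ) {i : Fin n} (hi : i ∈ S) :
    (∑ j ∈ S.erase i, (if hj : j ∈ S then q (e.symm ⟨j, hj⟩) else 0))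
      = ∑ b ∈ Finset.univ.filter (fun b => b ≠ e.symm ⟨i, hi⟩), q b := by
  refine Finset.sum_bij' (fun j hj => e.symm ⟨j, (Finset.mem_erase.mp hj).2⟩)
    (fun b _ => ((e b : {j // j ∈ S}) : Fin n)) ?_ ?_ ?_ ?_ ?_
  · intro j hj
    simp only [Finset.mem_filter, Finset.mem_univ, true_and]
    intro h
    have := congrArg (fun z => ((e z : {j // j ∈ S}) : Fin n)) h
    simp only [Equiv.apply_symm_apply] at this
    exact (Finset.mem_erase.mp hj).1 this
  · intro b hb
    simp only [Finset.mem_filter, Finset.mem_univ, true_and] at hb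
    refine Finset.mem_erase.mpr ⟨?_, (e b).2⟩
    intro h
    apply hb
    have : (e b : {j // j ∈ S}) = ⟨i, hi⟩ := Subtype.ext h
    rw [← this, Equiv.symm_apply_apply]
  · intro j hj
    simp [Equiv.apply_symm_apply]
  · intro b hb
    simp [Equiv.symm_apply_apply, Subtype.coe_eta]
  · intro j hj
    rw [dif_pos (Finset.mem_erase.mp hj).2]

private lemma moon_split {n : ℕ}
    (IH : ∀ m : ℕ, m < n → ∀ y : Fin m → ℝ, MoonCond m y →
      ∃ q : Fin m → Fin m → ℝ, IsWinProbMatrix q ∧ ∀ i, meanScore q i = y i)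
    {x : Fin n → ℝ} (hx : MoonCond n x) {S : Finset (Fin n)}
    (hS0 : S.Nonempty) (hSu : S ≠ Finset.univ)
    (heq : ∑ i ∈ S, x i = ((S.card * (S.card - 1) : ℕ) : ℝ) / 2) :
    ∃ p : Fin n → Fin n → ℝ, IsWinProbMatrix p ∧ ∀ i, meanScore p i = x i := by
  classical
  have hsn : S.card < n := by
    have h1 : S ⊂ Finset.univ := (Finset.subset_univ S).ssubset_of_ne hSu
    have := Finset.card_lt_card h1
    simpa using this
  have hs1 : 1 ≤ S.card := Finset.card_pos.mpr hS0
  have hcompl : Sᶜ.card = n - S.card := by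
    rw [Finset.card_compl]; simp
  have hmn : Sᶜ.card < n := by omega
  have hnsm : (n : ℝ) = (S.card : ℝ) + (Sᶜ.card : ℝ) := by
    rw [hcompl]
    have : S.card + (n - S.card) = n := by omega
    exact_mod_cast (by exact_mod_cast congrArg (Nat.cast (R := ℝ)) this.symm)
  set eS : Fin S.card ≃ {j // j ∈ S} := (S.orderIsoOfFin rfl).toEquiv with heS
  set eC : Fin Sᶜ.card ≃ {j // j ∈ Sᶜ} := (Sᶜ.orderIsoOfFin rfl).toEquiv with heC
  set embS : Fin S.card ↪ Fin n :=
    eS.toEmbedding.trans (Function.Embedding.subtype _) with hembS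
  set embC : Fin Sᶜ.card ↪ Fin n :=
    eC.toEmbedding.trans (Function.Embedding.subtype _) with hembC
  have hunivS : Finset.univ.map embS = S := by
    ext i
    simp only [Finset.mem_map, Finset.mem_univ, true_and]
    constructor
    · rintro ⟨a, rfl⟩; exact (eS a).2
    · intro hi; exact ⟨eS.symm ⟨i, hi⟩, by simp [hembS]⟩
  have hunivC : Finset.univ.map embC = Sᶜ := by
    ext i
    simp only [Finset.mem_map, Finset.mem_univ, true_and]
    constructor
    · rintro ⟨a, rfl⟩; exact (eC a).2
    · intro hi; exact ⟨eC.symm ⟨i, hi⟩, by simp [hembC]⟩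
  set xS : Fin S.card → ℝ := fun a => x (eS a) with hxSdef
  set xC : Fin Sᶜ.card → ℝ := fun a => x (eC a) - S.card with hxCdef
  have condS : MoonCond S.card xS := by
    constructor
    · intro T
      have h := hx.1 (T.map embS)
      rw [Finset.card_map, Finset.sum_map] at h
      exact h
    · have h : ∑ i ∈ S, x i = ∑ a, xS a := by
        conv_lhs => rw [← hunivS]
        rw [Finset.sum_map]
        rfl
      rw [← h, heq]
  have condC : MoonCond Sᶜ.card xC := by
    constructor
    · intro T
      have hT'sub : T.map embC ⊆ Sᶜ := by
        intro i hi
        rcases Finset.mem_map.mp hi with ⟨a, _, rfl⟩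
        exact (eC a).2
      have hdisj : Disjoint S (T.map embC) := by
        rw [Finset.disjoint_left]
        intro i hiS hiT
        exact (Finset.mem_compl.mp (hT'sub hiT)) hiS
      have h := hx.1 (S ∪ T.map embC)
      rw [Finset.card_union_of_disjoint hdisj, Finset.card_map,
        Finset.sum_union hdisj, Finset.sum_map] at h
      rw [moon_cast_q] at h heq ⊢
      push_cast at h
      have hsum : ∑ a ∈ T, xC a = (∑ a ∈ T, x (embC a)) - T.card * S.card := by
        rw [hxCdef, Finset.sum_sub_distrib, Finset.sum_const, nsmul_eq_mul]
        rfl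
      rw [hsum]
      nlinarith [h, heq]
    · have h : ∑ i ∈ Sᶜ, x i = ∑ a : Fin Sᶜ.card, x ↑(eC a) := by
        conv_lhs => rw [← hunivC]
        rw [Finset.sum_map]
        rfl
      have h2 : ∑ i ∈ S, x i + ∑ i ∈ Sᶜ, x i = ∑ i, x i :=
        Finset.sum_add_sum_compl S x
      have hsum : ∑ a, xC a = (∑ i ∈ Sᶜ, x i) - Sᶜ.card * S.card := by
        rw [hxCdef, Finset.sum_sub_distrib, Finset.sum_const, nsmul_eq_mul,
          Finset.card_univ, Fintype.card_fin]
        rw [← h]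
      have htot := hx.2
      rw [moon_cast_q] at heq htot ⊢
      rw [hsum]
      nlinarith [heq, htot, h2, hnsm]
  obtain ⟨pS, hpS, hxSp⟩ := IH S.card hsn xS condS
  obtain ⟨pC, hpC, hxCp⟩ := IH Sᶜ.card hmn xC condC
  have einjS : ∀ (a b : Fin n) (ha : a ∈ S) (hb : b ∈ S),
      eS.symm ⟨a, ha⟩ = eS.symm ⟨b, hb⟩ → a = b := by
    intro a b ha hb h
    have := congrArg (fun z => ((eS z : {j // j ∈ S}) : Fin n)) h
    simpa using this
  have einjC : ∀ (a b : Fin n) (ha : a ∈ Sᶜ) (hb : b ∈ Sᶜ),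
      eC.symm ⟨a, ha⟩ = eC.symm ⟨b, hb⟩ → a = b := by
    intro a b ha hb h
    have := congrArg (fun z => ((eC z : {j // j ∈ Sᶜ}) : Fin n)) h
    simpa using this
  refine ⟨fun i j =>
      if hi : i ∈ S then
        (if hj : j ∈ S then pS (eS.symm ⟨i, hi⟩) (eS.symm ⟨j, hj⟩) else 0)
      else
        (if hj : j ∈ S then 1
         else pC (eC.symm ⟨i, Finset.mem_compl.mpr hi⟩)
            (eC.symm ⟨j, Finset.mem_compl.mpr hj⟩)),
    ⟨fun i j => ?_, fun i j hij => ?_⟩, fun i => ?_⟩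
  · dsimp only
    split_ifs with h1 h2 h3
    · exact hpS.1 _ _
    · norm_num
    · norm_num
    · exact hpC.1 _ _
  · dsimp only
    by_cases hi : i ∈ S <;> by_cases hj : j ∈ S
    · rw [dif_pos hi, dif_pos hj, dif_pos hj, dif_pos hi]
      exact hpS.2 _ _ (fun h => hij (einjS i j hi hj h))
    · rw [dif_pos hi, dif_neg hj, dif_neg hj, dif_pos hi]; norm_num
    · rw [dif_neg hi, dif_pos hj, dif_pos hj, dif_neg hi]; norm_num
    · rw [dif_neg hi, dif_neg hj, dif_neg hj, dif_neg hi]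
      exact hpC.2 _ _ (fun h => hij (einjC i j _ _ h))
  · have filter_split : ∀ (f : Fin n → ℝ),
        (∑ j ∈ Finset.univ.filter (fun j => j ≠ i), f j)
          = (∑ j ∈ S.erase i, f j) + ∑ j ∈ Sᶜ.erase i, f j := by
      intro f
      rw [← Finset.sum_filter_add_sum_filter_not
        (Finset.univ.filter (fun j => j ≠ i)) (fun j => j ∈ S)]
      congr 1
      · apply Finset.sum_congr ?_ (fun _ _ => rfl)
        ext j
        simp only [Finset.mem_filter, Finset.mem_univ, true_and, Finset.mem_erase]
      · apply Finset.sum_congr ?_ (fun _ _ => rfl)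
        ext j
        simp only [Finset.mem_filter, Finset.mem_univ, true_and, Finset.mem_erase,
          Finset.mem_compl]
    show meanScore _ i = x i
    unfold meanScore
    rw [filter_split]
    dsimp only
    by_cases hi : i ∈ S
    · have hzero : (∑ j ∈ Sᶜ.erase i,
          (if hi' : i ∈ S then
            (if hj : j ∈ S then pS (eS.symm ⟨i, hi'⟩) (eS.symm ⟨j, hj⟩) else 0)
          else
            (if hj : j ∈ S then 1
             else pC (eC.symm ⟨i, Finset.mem_compl.mpr hi'⟩)
                (eC.symm ⟨j, Finset.mem_compl.mpr hj⟩)))) = (0:ℝ) := Finset.sum_eq_zero (by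
        intro j hj
        have hjC : j ∈ Sᶜ := (Finset.mem_erase.mp hj).2
        have hjS : j ∉ S := Finset.mem_compl.mp hjC
        rw [dif_pos hi, dif_neg hjS])
      rw [hzero, add_zero]
      have hcongr : ∀ j ∈ S.erase i,
          (if hi' : i ∈ S then
            (if hj : j ∈ S then pS (eS.symm ⟨i, hi'⟩) (eS.symm ⟨j, hj⟩) else 0)
          else
            (if hj : j ∈ S then 1
             else pC (eC.symm ⟨i, Finset.mem_compl.mpr hi'⟩)
                (eC.symm ⟨j, Finset.mem_compl.mpr hj⟩)))
          = (if hj : j ∈ S then pS (eS.symm ⟨i, hi⟩) (eS.symm ⟨j, hj⟩) else 0) := by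
        intro j hj
        rw [dif_pos hi]
      rw [Finset.sum_congr rfl hcongr, moon_sum_erase eS (pS (eS.symm ⟨i, hi⟩)) hi]
      have := hxSp (eS.symm ⟨i, hi⟩)
      unfold meanScore at this
      rw [this, hxSdef]
      simp
    · have hiC : i ∈ Sᶜ := Finset.mem_compl.mpr hi
      have hfirst : (∑ j ∈ S.erase i,
          (if hi' : i ∈ S then
            (if hj : j ∈ S then pS (eS.symm ⟨i, hi'⟩) (eS.symm ⟨j, hj⟩) else 0)
          else
            (if hj : j ∈ S then 1
             else pC (eC.symm ⟨i, Finset.mem_compl.mpr hi'⟩)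
                (eC.symm ⟨j, Finset.mem_compl.mpr hj⟩)))) = ((S.card : ℕ) : ℝ) := by
        rw [Finset.erase_eq_of_notMem hi]
        rw [Finset.sum_congr rfl (fun j hj => by rw [dif_neg hi, dif_pos hj])]
        rw [Finset.sum_const, nsmul_eq_mul, mul_one]
      rw [hfirst]
      have hcongr : ∀ j ∈ Sᶜ.erase i,
          (if hi' : i ∈ S then
            (if hj : j ∈ S then pS (eS.symm ⟨i, hi'⟩) (eS.symm ⟨j, hj⟩) else 0)
          else
            (if hj : j ∈ S then 1
             else pC (eC.symm ⟨i, Finset.mem_compl.mpr hi'⟩)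
                (eC.symm ⟨j, Finset.mem_compl.mpr hj⟩)))
          = (if hj : j ∈ Sᶜ then pC (eC.symm ⟨i, hiC⟩) (eC.symm ⟨j, hj⟩) else 0) := by
        intro j hj
        have hjC : j ∈ Sᶜ := (Finset.mem_erase.mp hj).2
        have hjS : j ∉ S := Finset.mem_compl.mp hjC
        rw [dif_neg hi, dif_neg hjS, dif_pos hjC]
      rw [Finset.sum_congr rfl hcongr, moon_sum_erase eC (pC (eC.symm ⟨i, hiC⟩)) hiC]
      have := hxCp (eC.symm ⟨i, hiC⟩)
      unfold meanScore at this
      rw [this, hxCdef]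
      simp

private lemma moon_shift {n : ℕ} {x : Fin n → ℝ} (hx : MoonCond n x)
    (hstrict : ∀ S : Finset (Fin n), S.Nonempty → S ≠ Finset.univ →
      ((S.card * (S.card - 1) : ℕ) : ℝ) / 2 < ∑ i ∈ S, x i)
    (i0 i1 : Fin n) (h01 : i0 ≠ i1) :
    ∃ ε : ℝ, 0 < ε ∧
      MoonCond n (fun i => x i + ε * ((if i = i1 then 1 else 0) - (if i = i0 then 1 else 0))) ∧
      ∃ S : Finset (Fin n), S.Nonempty ∧ S ≠ Finset.univ ∧
        ∑ i ∈ S, (x i + ε * ((if i = i1 then 1 else 0) - (if i = i0 then 1 else 0)))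
          = ((S.card * (S.card - 1) : ℕ) : ℝ) / 2 := by
  classical
  set g : Finset (Fin n) → ℝ := fun S => ∑ i ∈ S, x i - ((S.card * (S.card - 1) : ℕ) : ℝ) / 2
    with hg
  have hgdef : ∀ S, g S = ∑ i ∈ S, x i - ((S.card * (S.card - 1) : ℕ) : ℝ) / 2 :=
    fun S => rfl
  have hmemF : ({i0} : Finset (Fin n)) ∈ Finset.univ.filter
      (fun S : Finset (Fin n) => i0 ∈ S ∧ i1 ∉ S) := by
    have h10 : ¬ i1 = i0 := fun h => h01 h.symm
    simp [h10]
  obtain ⟨T, hTF, hTmin⟩ := Finset.exists_min_image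
    (Finset.univ.filter (fun S : Finset (Fin n) => i0 ∈ S ∧ i1 ∉ S)) g ⟨_, hmemF⟩
  rw [Finset.mem_filter] at hTF
  have hTne : T.Nonempty := ⟨i0, hTF.2.1⟩
  have hTnu : T ≠ Finset.univ := fun h => hTF.2.2 (h ▸ Finset.mem_univ i1)
  have hεpos : 0 < g T := by
    have := hstrict T hTne hTnu
    rw [hgdef]; linarith
  have hsum : ∀ (S : Finset (Fin n)) (ε : ℝ),
      ∑ i ∈ S, (x i + ε * ((if i = i1 then 1 else 0) - (if i = i0 then 1 else 0)))
        = ∑ i ∈ S, x i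
          + ε * ((if i1 ∈ S then (1:ℝ) else 0) - (if i0 ∈ S then (1:ℝ) else 0)) := by
    intro S ε
    rw [Finset.sum_add_distrib, ← Finset.mul_sum, Finset.sum_sub_distrib,
      Finset.sum_ite_eq' S i1 (fun _ => (1:ℝ)), Finset.sum_ite_eq' S i0 (fun _ => (1:ℝ))]
  refine ⟨g T, hεpos, ⟨fun S => ?_, ?_⟩, T, hTne, hTnu, ?_⟩
  · rw [hsum]
    by_cases h0 : i0 ∈ S <;> by_cases h1 : i1 ∈ S <;>
      simp only [h0, h1, if_true, if_false]
    · have := hx.1 S; linarith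
    · have hSF : S ∈ Finset.univ.filter
          (fun S : Finset (Fin n) => i0 ∈ S ∧ i1 ∉ S) := by
        simp [h0, h1]
      have h5 := hTmin S hSF
      rw [hgdef, hgdef] at h5
      rw [hgdef]
      linarith
    · have := hx.1 S
      have hp := hεpos
      rw [hgdef] at hp
      rw [hgdef]
      linarith
    · have := hx.1 S; linarith
  · rw [hsum]
    simp only [Finset.mem_univ, if_true]
    have := hx.2; linarith
  · rw [hsum]
    simp only [hTF.2.1, hTF.2.2, if_true, if_false]
    rw [hgdef]
    ring

private lemma moon_exists : ∀ (n : ℕ) (x : Fin n → ℝ), MoonCond n x →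
    ∃ p : Fin n → Fin n → ℝ, IsWinProbMatrix p ∧ ∀ i, meanScore p i = x i := by
  intro n
  induction n using Nat.strong_induction_on with
  | _ n IH =>
  intro x hx
  by_cases hsmall : n ≤ 1
  · interval_cases n
    · exact ⟨fun _ _ => 0, ⟨fun i j => ⟨le_refl 0, zero_le_one⟩, fun i => i.elim0⟩,
        fun i => i.elim0⟩
    · refine ⟨fun _ _ => 0, ⟨fun i j => ⟨le_refl 0, zero_le_one⟩,
        fun i j hij => absurd (Subsingleton.elim i j) hij⟩, fun i => ?_⟩
      have h2 := hx.2
      rw [Fin.sum_univ_one] at h2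
      have hi0 : i = 0 := Subsingleton.elim i 0
      have hfe : Finset.univ.filter (fun j : Fin 1 => j ≠ i) = ∅ := by
        ext j
        simp [Subsingleton.elim j i]
      unfold meanScore
      rw [hfe, Finset.sum_empty, hi0, h2]
      norm_num
  · push_neg at hsmall
    by_cases hE : ∃ S : Finset (Fin n), S.Nonempty ∧ S ≠ Finset.univ ∧
        ∑ i ∈ S, x i = ((S.card * (S.card - 1) : ℕ) : ℝ) / 2
    · obtain ⟨S, h1, h2, h3⟩ := hE
      exact moon_split IH hx h1 h2 h3
    · push_neg at hE
      have hstrict : ∀ S : Finset (Fin n), S.Nonempty → S ≠ Finset.univ →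
          ((S.card * (S.card - 1) : ℕ) : ℝ) / 2 < ∑ i ∈ S, x i :=
        fun S hS1 hS2 => lt_of_le_of_ne (hx.1 S) (Ne.symm (hE S hS1 hS2))
      have h0n : 0 < n := by omega
      set a0 : Fin n := ⟨0, h0n⟩ with ha0
      set a1 : Fin n := ⟨1, hsmall⟩ with ha1
      have h01 : a0 ≠ a1 := by
        intro h
        have := congrArg Fin.val h
        simp [ha0, ha1] at this
      obtain ⟨ea, hea, hca, Sa, hSa1, hSa2, hSa3⟩ :=
        moon_shift hx hstrict a0 a1 h01
      obtain ⟨eb, heb, hcb, Sb, hSb1, hSb2, hSb3⟩ :=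
        moon_shift hx hstrict a1 a0 (Ne.symm h01)
      obtain ⟨pa, hpa, hsa⟩ := moon_split IH hca hSa1 hSa2 hSa3
      obtain ⟨pb, hpb, hsb⟩ := moon_split IH hcb hSb1 hSb2 hSb3
      have hab : (0:ℝ) < ea + eb := by linarith
      have hA : (0:ℝ) ≤ eb / (ea + eb) := by positivity
      have hB : (0:ℝ) ≤ ea / (ea + eb) := by positivity
      have hAB : eb / (ea + eb) + ea / (ea + eb) = 1 := by field_simp; ring
      obtain ⟨hwpm, hsc⟩ := moon_combine hpa hpb hsa hsb hA hB hAB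
      refine ⟨_, hwpm, fun i => ?_⟩
      rw [hsc i]
      by_cases h0 : i = a0
      · have hn1 : ¬ i = a1 := fun h => h01 (h0.symm.trans h)
        rw [if_neg hn1, if_pos h0]
        field_simp
        ring
      · by_cases h1 : i = a1
        · rw [if_pos h1, if_neg h0]
          field_simp
          ring
        · rw [if_neg h1, if_neg h0]
          field_simp
          try ring

private lemma moon_le_apply {k n : ℕ} (g : Fin k → Fin n) (hg : StrictMono g) :
    ∀ (m : ℕ) (hm : m < k), m ≤ ((g ⟨m, hm⟩ : Fin n) : ℕ) := by
  intro m
  induction m with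
  | zero => intro _; exact Nat.zero_le _
  | succ m ih =>
    intro hm
    have hm' : m < k := by omega
    have hlt : (⟨m, hm'⟩ : Fin k) < ⟨m + 1, hm⟩ :=
      Fin.mk_lt_mk.mpr (Nat.lt_succ_self m)
    have h3 : ((g ⟨m, hm'⟩ : Fin n) : ℕ) < ((g ⟨m + 1, hm⟩ : Fin n) : ℕ) := hg hlt
    have h2 := ih hm'
    omega

private lemma moon_prefix_map {n k : ℕ} (hk : k ≤ n) :
    (Finset.univ.filter (fun i : Fin n => (i : ℕ) < k))
      = Finset.univ.map (Fin.castLEEmb hk) := by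
  ext i
  constructor
  · intro hik
    have hik' : (i : ℕ) < k := (Finset.mem_filter.mp hik).2
    exact Finset.mem_map.mpr ⟨⟨(i : ℕ), hik'⟩, Finset.mem_univ _, by
      simp [Fin.coe_castLEEmb, Fin.ext_iff]⟩
  · intro hi
    obtain ⟨a, _, ha⟩ := Finset.mem_map.mp hi
    refine Finset.mem_filter.mpr ⟨Finset.mem_univ _, ?_⟩
    rw [← ha]
    simpa [Fin.coe_castLEEmb] using a.isLt

private lemma moon_bridge {n : ℕ} {x : Fin n → ℝ} (hx : Monotone x)
    (h : ∀ k : ℕ, 1 ≤ k → k ≤ n →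
      ((k * (k - 1) : ℕ) : ℝ) / 2 ≤
        ∑ i ∈ Finset.univ.filter (fun i : Fin n => (i : ℕ) < k), x i) :
    ∀ S : Finset (Fin n),
      ((S.card * (S.card - 1) : ℕ) : ℝ) / 2 ≤ ∑ i ∈ S, x i := by
  intro S
  rcases S.eq_empty_or_nonempty with hS | hS
  · subst hS; simp
  · have hk1 : 1 ≤ S.card := Finset.card_pos.mpr hS
    have hkn : S.card ≤ n := by
      have := Finset.card_le_univ S
      simpa using this
    have hmapS : Finset.univ.map (S.orderEmbOfFin rfl).toEmbedding = S := by
      ext i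
      simp only [Finset.mem_map, Finset.mem_univ, true_and]
      constructor
      · rintro ⟨a, rfl⟩; exact Finset.orderEmbOfFin_mem S rfl a
      · intro hi
        have : i ∈ Set.range (S.orderEmbOfFin rfl) := by
          rw [Finset.range_orderEmbOfFin]; exact hi
        obtain ⟨a, ha⟩ := this
        exact ⟨a, ha⟩
    have hsumS : ∑ i ∈ S, x i = ∑ a : Fin S.card, x ((S.orderEmbOfFin rfl) a) := by
      conv_lhs => rw [← hmapS]
      rw [Finset.sum_map]
      rfl
    have hsumP : ∑ i ∈ Finset.univ.filter (fun i : Fin n => (i : ℕ) < S.card), x i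
        = ∑ a : Fin S.card, x (Fin.castLE hkn a) := by
      rw [moon_prefix_map hkn, Finset.sum_map]
      rfl
    have hterm : ∀ a : Fin S.card, x (Fin.castLE hkn a) ≤ x ((S.orderEmbOfFin rfl) a) := by
      intro a
      apply hx
      rw [Fin.le_def]
      have := moon_le_apply (S.orderEmbOfFin rfl) (S.orderEmbOfFin rfl).strictMono
        (a : ℕ) a.isLt
      simpa using this
    have := h S.card hk1 hkn
    rw [hsumP] at this
    rw [hsumS]
    calc ((S.card * (S.card - 1) : ℕ) : ℝ) / 2 ≤ ∑ a : Fin S.card, x (Fin.castLE hkn a) := this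
      _ ≤ ∑ a : Fin S.card, x ((S.orderEmbOfFin rfl) a) := Finset.sum_le_sum (fun a _ => hterm a)

/-- Moon's theorem: a monotone `x` is the mean score sequence of some
win-probability matrix iff `x` is majorized by `(0,1,…,n-1)`. -/
theorem moon_theorem (n : ℕ) (hn : 1 ≤ n) (x : Fin n → ℝ) (hx : Monotone x) :
    (∃ p : Fin n → Fin n → ℝ, IsWinProbMatrix p ∧ ∀ i, meanScore p i = x i) ↔
    ((∀ k : ℕ, 1 ≤ k → k ≤ n →
        ((k * (k - 1) : ℕ) : ℝ) / 2 ≤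
          ∑ i ∈ Finset.univ.filter (fun i : Fin n => (i : ℕ) < k), x i) ∧
      ∑ i, x i = ((n * (n - 1) : ℕ) : ℝ) / 2) := by
  constructor
  · rintro ⟨p, hp, hsc⟩
    have hc := moon_forward hp hsc
    constructor
    · intro k hk1 hkn
      have hcard : (Finset.univ.filter (fun i : Fin n => (i : ℕ) < k)).card = k := by
        rw [moon_prefix_map hkn, Finset.card_map, Finset.card_univ, Fintype.card_fin]
      have := hc.1 (Finset.univ.filter (fun i : Fin n => (i : ℕ) < k))
      rwa [hcard] at this
    · exact hc.2
  · rintro ⟨h1, h2⟩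
    exact moon_exists n x ⟨moon_bridge hx h1, h2⟩
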